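/- arXiv:2203.00544 — 2 statements merged into one kernel-verified Lean document; each statement's English description precedes it below -/
import Mathlib

section
/- For every school c in a school-choice instance, the minority-reserve choice function C^MR_c is substitutable: for every set of students S1, every student s ∈ C^MR_c(S1), and every set S2 with s ∈ S2 ⊆ S1, one has s ∈ C^MR_c(S2). -/
/-!
Common formalization of school-choice instances with reserved seats
(minority reserve, joint seat allocation, discovery program).

Conventions:
* `prio c s` is the priority rank of student `s` at school `c`
  (smaller value = higher priority); injectivity encodes a strict priority order.
* `pref s o` is the preference rank of outcome `o : Option C` for student `s`
  (smaller value = more preferred); `none` denotes being unmatched, and a school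
  `c` is acceptable to `s` iff `pref s (some c) < pref s none`.
-/

open Finset

structure SchoolChoice (S C : Type*) [Fintype S] [DecidableEq S] [Fintype C] [DecidableEq C] where
  /-- the set of disadvantaged (minority) students; the rest are advantaged -/
  dis : Finset S
  /-- preference rank of each outcome (school or `none` = unmatched) for each student -/
  pref : S → Option C → ℕ
  pref_inj : ∀ s, Function.Injective (pref s)
  /-- priority rank of each student at each school (lower = higher priority) -/
  prio : C → S → ℕ
  prio_inj : ∀ c, Function.Injective (prio c)
  /-- quota of each school -/
  q : C → ℕ
  /-- reservation quota of each school -/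
  qR : C → ℕ
  qR_le : ∀ c, qR c ≤ q c

namespace SchoolChoice

variable {S C : Type*} [Fintype S] [DecidableEq S] [Fintype C] [DecidableEq C]

/-- `max(T, >_c, k)`: the `min(k, |T|)` highest-priority students of `T` at school `c`. -/
def maxSet (I : SchoolChoice S C) (c : C) (T : Finset S) (k : ℕ) : Finset S :=
  T.filter fun s => (T.filter fun t => I.prio c t < I.prio c s).card < k

/-- baseline choice function `C^BASE_c` -/
def CBASE (I : SchoolChoice S C) (c : C) (T : Finset S) : Finset S :=
  I.maxSet c T (I.q c)

/-- `S1^R` of the minority-reserve choice function -/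
def mrRes (I : SchoolChoice S C) (c : C) (T : Finset S) : Finset S :=
  I.maxSet c (T ∩ I.dis) (I.qR c)

/-- minority-reserve choice function `C^MR_c` -/
def CMR (I : SchoolChoice S C) (c : C) (T : Finset S) : Finset S :=
  I.mrRes c T ∪ I.maxSet c (T \ I.mrRes c T) (I.q c - (I.mrRes c T).card)

/-- `S1^G` of the joint-seat-allocation choice function -/
def jsaGen (I : SchoolChoice S C) (c : C) (T : Finset S) : Finset S :=
  I.maxSet c T (I.q c - I.qR c)

/-- `S1^R` of the joint-seat-allocation choice function -/
def jsaRes (I : SchoolChoice S C) (c : C) (T : Finset S) : Finset S :=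
  I.maxSet c ((T ∩ I.dis) \ I.jsaGen c T) (I.qR c)

/-- joint-seat-allocation choice function `C^JSA_c` -/
def CJSA (I : SchoolChoice S C) (c : C) (T : Finset S) : Finset S :=
  I.jsaGen c T ∪ I.jsaRes c T ∪
    I.maxSet c (T \ (I.jsaGen c T ∪ I.jsaRes c T))
      (I.q c - (I.jsaGen c T ∪ I.jsaRes c T).card)

/-- school `c` is acceptable to student `s` -/
def acceptable (I : SchoolChoice S C) (s : S) (c : C) : Prop :=
  I.pref s (some c) < I.pref s none

/-- `μ(c)`: the set of students assigned to school `c` by `μ` -/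
def assigned (I : SchoolChoice S C) (μ : S → Option C) (c : C) : Finset S :=
  Finset.univ.filter fun s => μ s = some c

/-- `μ` is a matching: students are assigned only acceptable schools, quotas respected -/
def IsMatching (I : SchoolChoice S C) (μ : S → Option C) : Prop :=
  (∀ s c, μ s = some c → I.acceptable s c) ∧ ∀ c, (I.assigned μ c).card ≤ I.q c

/-- `μ` is stable w.r.t. the choice functions `Ch`: it is a matching and no pair
`(s, c)` with `c` acceptable to `s` satisfies `c >_s μ(s)` and `s ∈ Ch c (μ(c) ∪ {s})`. -/
def IsStable (I : SchoolChoice S C) (Ch : C → Finset S → Finset S) (μ : S → Option C) : Prop :=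
  I.IsMatching μ ∧
    ∀ s c, I.acceptable s c → I.pref s (some c) < I.pref s (μ s) →
      s ∉ Ch c (insert s (I.assigned μ c))

/-- `μ` is the student-optimal stable matching w.r.t. `Ch`:
stable and weakly preferred by every student to every stable matching. -/
def IsOptStable (I : SchoolChoice S C) (Ch : C → Finset S → Finset S) (μ : S → Option C) :
    Prop :=
  I.IsStable Ch μ ∧ ∀ μ', I.IsStable Ch μ' → ∀ s, I.pref s (μ s) ≤ I.pref s (μ' s)

/-! Restricted (sub)instances, used by the three-stage discovery program: only students
in `A` participate and school `c` has quota `q' c`, with baseline (responsive) choice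
functions. -/

def IsMatchingOn (I : SchoolChoice S C) (A : Finset S) (q' : C → ℕ) (μ : S → Option C) :
    Prop :=
  (∀ s, s ∉ A → μ s = none) ∧
    (∀ s c, μ s = some c → I.acceptable s c) ∧ ∀ c, (I.assigned μ c).card ≤ q' c

def IsStableOn (I : SchoolChoice S C) (A : Finset S) (q' : C → ℕ) (μ : S → Option C) : Prop :=
  I.IsMatchingOn A q' μ ∧
    ∀ s ∈ A, ∀ c : C, I.acceptable s c → I.pref s (some c) < I.pref s (μ s) →
      s ∉ I.maxSet c (insert s (I.assigned μ c)) (q' c)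

def IsOptStableOn (I : SchoolChoice S C) (A : Finset S) (q' : C → ℕ) (μ : S → Option C) :
    Prop :=
  I.IsStableOn A q' μ ∧
    ∀ μ', I.IsStableOn A q' μ' → ∀ s ∈ A, I.pref s (μ s) ≤ I.pref s (μ' s)

/-- `μ` is the discovery-program matching: the union of the three stage matchings
`μ1` (general seats, all students), `μ2` (reserved seats, unmatched disadvantaged
students), `μ3` (vacant reserved seats, unmatched advantaged students). -/
def IsDisc (I : SchoolChoice S C) (μ : S → Option C) : Prop :=
  ∃ μ1 μ2 μ3 : S → Option C,
    I.IsOptStableOn Finset.univ (fun c => I.q c - I.qR c) μ1 ∧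
    I.IsOptStableOn (I.dis.filter fun s => μ1 s = none) I.qR μ2 ∧
    I.IsOptStableOn ((Finset.univ \ I.dis).filter fun s => μ1 s = none)
      (fun c => I.qR c - (I.assigned μ2 c).card) μ3 ∧
    ∀ s, μ s = Option.elim (μ1 s) (Option.elim (μ2 s) (μ3 s) some) some

/-- `(s, c)` is a blocking pair of `μ` for disadvantaged students -/
def BlockDis (I : SchoolChoice S C) (μ : S → Option C) (s : S) (c : C) : Prop :=
  s ∈ I.dis ∧ I.acceptable s c ∧ I.pref s (some c) < I.pref s (μ s) ∧
    ∃ s' ∈ I.assigned μ c, s' ∈ I.dis ∧ I.prio c s < I.prio c s'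

/-- `(s, c)` is a blocking pair of `μ` for advantaged students -/
def BlockAdv (I : SchoolChoice S C) (μ : S → Option C) (s : S) (c : C) : Prop :=
  s ∉ I.dis ∧ I.acceptable s c ∧ I.pref s (some c) < I.pref s (μ s) ∧
    ∃ s' ∈ I.assigned μ c, s' ∉ I.dis ∧ I.prio c s < I.prio c s'

/-- `(s, c)` is an in-group blocking pair of `μ` -/
def InGroupBlock (I : SchoolChoice S C) (μ : S → Option C) (s : S) (c : C) : Prop :=
  I.BlockDis μ s c ∨ I.BlockAdv μ s c

/-- all schools share a common priority order over the students -/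
def CommonPriority (I : SchoolChoice S C) : Prop :=
  ∀ c c' : C, ∀ t u : S, I.prio c t < I.prio c u ↔ I.prio c' t < I.prio c' u

/-- the reservation quotas are a smart reserve w.r.t. the baseline matching `μBase` -/
def SmartReserve (I : SchoolChoice S C) (μBase : S → Option C) : Prop :=
  ∀ c, (I.assigned μBase c ∩ I.dis).card ≤ I.qR c

end SchoolChoice
namespace SchoolChoice

variable {S C : Type*} [Fintype S] [DecidableEq S] [Fintype C] [DecidableEq C]

lemma maxSet_sub (I : SchoolChoice S C) (c : C) {T T' : Finset S} {k : ℕ} {s : S}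
    (hs : s ∈ I.maxSet c T k) (hs' : s ∈ T') (hsub : T' ⊆ T) : s ∈ I.maxSet c T' k := by
  simp only [maxSet, mem_filter] at hs ⊢
  exact ⟨hs', lt_of_le_of_lt (card_le_card (filter_subset_filter _ hsub)) hs.2⟩

lemma maxSet_subset (I : SchoolChoice S C) (c : C) (T : Finset S) (k : ℕ) :
    I.maxSet c T k ⊆ T := filter_subset _ _

lemma card_maxSet (I : SchoolChoice S C) (c : C) (T : Finset S) (k : ℕ) :
    (I.maxSet c T k).card = min k T.card := by
  set r : S → ℕ := fun s => (T.filter fun t => I.prio c t < I.prio c s).card with hr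
  have key : ∀ a ∈ T, ∀ b : S, I.prio c a < I.prio c b → r a < r b := by
    intro a ha b hab
    have hsub : insert a (T.filter fun t => I.prio c t < I.prio c a) ⊆
        T.filter fun t => I.prio c t < I.prio c b := by
      intro x hx
      rcases mem_insert.mp hx with rfl | hx
      · exact mem_filter.mpr ⟨ha, hab⟩
      · have := mem_filter.mp hx
        exact mem_filter.mpr ⟨this.1, this.2.trans hab⟩
    have hna : a ∉ T.filter fun t => I.prio c t < I.prio c a := by
      simp [mem_filter]
    have h1 := card_le_card hsub
    rw [card_insert_of_notMem hna] at h1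
    simpa [hr] using h1
  have hinj : Set.InjOn r T := by
    intro a ha b hb hab
    by_contra hne
    have hpne : I.prio c a ≠ I.prio c b := fun h => hne (I.prio_inj c h)
    rcases hpne.lt_or_gt with h | h
    · exact absurd hab (key a ha b h).ne
    · exact absurd hab.symm (key b hb a h).ne
  have hlt : ∀ a ∈ T, r a < T.card := by
    intro a ha
    have hsub : (T.filter fun t => I.prio c t < I.prio c a) ⊆ T.erase a := by
      intro x hx
      have hx' := mem_filter.mp hx
      refine mem_erase.mpr ⟨?_, hx'.1⟩
      rintro rfl
      exact absurd hx'.2 (lt_irrefl _)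
    calc r a ≤ (T.erase a).card := card_le_card hsub
      _ < T.card := card_erase_lt_of_mem ha
  have himg : T.image r = Finset.range T.card := by
    apply Finset.eq_of_subset_of_card_le
    · intro i hi
      rcases mem_image.mp hi with ⟨a, ha, rfl⟩
      exact mem_range.mpr (hlt a ha)
    · rw [card_range, card_image_of_injOn hinj]
  have hface : I.maxSet c T k = T.filter fun s => r s < k := rfl
  have h1 : ((T.filter fun s => r s < k).image r).card = (I.maxSet c T k).card := by
    rw [hface]
    exact card_image_of_injOn (hinj.mono (by exact_mod_cast filter_subset _ _))
  have h2 : (T.filter fun s => r s < k).image r = (range T.card).filter fun i => i < k := by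
    rw [← himg, filter_image]
  have h3 : (range T.card).filter (fun i => i < k) = range (min k T.card) := by
    ext i
    simp only [mem_filter, mem_range, lt_min_iff]
    omega
  rw [← h1, h2, h3, card_range]

end SchoolChoice

/-- the minority-reserve choice function is substitutable. -/
theorem CMR_substitutable {S C : Type*} [Fintype S] [DecidableEq S] [Fintype C] [DecidableEq C]
    (I : SchoolChoice S C) (c : C) (S1 S2 : Finset S) (s : S)
    (hs : s ∈ I.CMR c S1) (hs2 : s ∈ S2) (hsub : S2 ⊆ S1) :
    s ∈ I.CMR c S2 := by
  classical
  set R1 := I.mrRes c S1 with hR1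
  set R2 := I.mrRes c S2 with hR2
  have hR2card : R2.card ≤ R1.card := by
    rw [hR1, hR2, SchoolChoice.mrRes, SchoolChoice.mrRes,
      I.card_maxSet, I.card_maxSet]
    exact min_le_min le_rfl (card_le_card (inter_subset_inter hsub (subset_refl _)))
  have hR1R2 : ∀ t ∈ R1, t ∈ S2 → t ∈ R2 := by
    intro t ht hts
    have htd : t ∈ S1 ∩ I.dis := I.maxSet_subset c _ _ ht
    exact I.maxSet_sub c ht (mem_inter.mpr ⟨hts, (mem_inter.mp htd).2⟩)
      (inter_subset_inter hsub (subset_refl _))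
  rcases mem_union.mp hs with hR | hG
  · exact mem_union_left _ (hR1R2 s hR hs2)
  · by_cases hsR2 : s ∈ R2
    · exact mem_union_left _ hsR2
    · refine mem_union_right _ ?_
      have hdiff : S2 \ R2 ⊆ S1 \ R1 := by
        intro t ht
        have ht' := mem_sdiff.mp ht
        refine mem_sdiff.mpr ⟨hsub ht'.1, fun hc => ht'.2 (hR1R2 t hc ht'.1)⟩
      have hsG := mem_filter.mp hG
      refine mem_filter.mpr ⟨mem_sdiff.mpr ⟨hs2, hsR2⟩, ?_⟩
      calc ((S2 \ R2).filter fun t => I.prio c t < I.prio c s).card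
          ≤ ((S1 \ R1).filter fun t => I.prio c t < I.prio c s).card :=
            card_le_card (filter_subset_filter _ hdiff)
        _ < I.q c - R1.card := hsG.2
        _ ≤ I.q c - R2.card := Nat.sub_le_sub_left hR2card _
end

section
/- In any school-choice instance, any matching that is stable with respect to the joint-seat-allocation choice functions {C^JSA_c : c ∈ C} (in particular the student-optimal stable matching μ^JSA) admits no in-group blocking pairs. -/
/-!
Common formalization of school-choice instances with reserved seats
(minority reserve, joint seat allocation, discovery program).

Conventions:
* `prio c s` is the priority rank of student `s` at school `c`
  (smaller value = higher priority); injectivity encodes a strict priority order.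
* `pref s o` is the preference rank of outcome `o : Option C` for student `s`
  (smaller value = more preferred); `none` denotes being unmatched, and a school
  `c` is acceptable to `s` iff `pref s (some c) < pref s none`.
-/

open Finset

namespace SchoolChoice

variable {S C : Type*} [Fintype S] [DecidableEq S] [Fintype C] [DecidableEq C]

lemma mem_maxSet_of_lt (I : SchoolChoice S C) {c : C} {T : Finset S} {k : ℕ} {s t : S}
    (hs : s ∈ T) (ht : t ∈ I.maxSet c T k) (h : I.prio c s < I.prio c t) :
    s ∈ I.maxSet c T k := by
  simp only [maxSet, mem_filter] at ht ⊢
  refine ⟨hs, lt_of_le_of_lt (card_le_card ?_) ht.2⟩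
  intro x hx
  simp only [mem_filter] at hx ⊢
  exact ⟨hx.1, hx.2.trans h⟩

lemma CJSA_subset (I : SchoolChoice S C) (c : C) (T : Finset S) : I.CJSA c T ⊆ T := by
  unfold CJSA
  refine union_subset (union_subset (I.maxSet_subset _ _ _) ?_) ?_
  · exact (I.maxSet_subset _ _ _).trans ((sdiff_subset).trans inter_subset_left)
  · exact (I.maxSet_subset _ _ _).trans sdiff_subset

lemma card_CJSA (I : SchoolChoice S C) (c : C) (T : Finset S) :
    (I.CJSA c T).card = min (I.q c) T.card := by
  classical
  set G := I.jsaGen c T with hG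
  set R := I.jsaRes c T with hRdef
  have hGT : G ⊆ T := I.maxSet_subset _ _ _
  have hRsub : R ⊆ (T ∩ I.dis) \ G := I.maxSet_subset _ _ _
  have hGR : Disjoint G R := by
    rw [disjoint_right]
    intro x hx
    exact (mem_sdiff.mp (hRsub hx)).2
  have hUT : G ∪ R ⊆ T :=
    union_subset hGT (hRsub.trans (sdiff_subset.trans inter_subset_left))
  have hcardG : G.card = min (I.q c - I.qR c) T.card := I.card_maxSet _ _ _
  have hcardR : R.card ≤ I.qR c := by
    rw [hRdef, jsaRes, I.card_maxSet]; exact min_le_left _ _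
  have hqR := I.qR_le c
  have hUq : (G ∪ R).card ≤ I.q c := by
    rw [card_union_of_disjoint hGR]
    have : G.card ≤ I.q c - I.qR c := hcardG ▸ min_le_left _ _
    omega
  have hUcT : (G ∪ R).card ≤ T.card := card_le_card hUT
  have hthird : (I.maxSet c (T \ (G ∪ R)) (I.q c - (G ∪ R).card)).card
      = min (I.q c - (G ∪ R).card) (T.card - (G ∪ R).card) := by
    rw [I.card_maxSet, card_sdiff_of_subset hUT]
  have hdisj : Disjoint (G ∪ R) (I.maxSet c (T \ (G ∪ R)) (I.q c - (G ∪ R).card)) := by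
    rw [disjoint_right]
    intro x hx
    exact (mem_sdiff.mp (I.maxSet_subset _ _ _ hx)).2
  have : (I.CJSA c T).card = (G ∪ R).card
      + (I.maxSet c (T \ (G ∪ R)) (I.q c - (G ∪ R).card)).card := by
    rw [CJSA, card_union_of_disjoint hdisj]
  rw [this, hthird]
  omega

lemma no_block_aux (I : SchoolChoice S C) (μ : S → Option C)
    (hstable : I.IsStable I.CJSA μ) {s s' : S} {c : C}
    (hacc : I.acceptable s c) (hpref : I.pref s (some c) < I.pref s (μ s))
    (hs'μ : s' ∈ I.assigned μ c) (himp : s' ∈ I.dis → s ∈ I.dis)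
    (hlt : I.prio c s < I.prio c s') : False := by
  classical
  obtain ⟨⟨hm1, hm2⟩, hstab⟩ := hstable
  set T := insert s (I.assigned μ c) with hT
  have hnot : s ∉ I.CJSA c T := hstab s c hacc hpref
  have hμs : μ s ≠ some c := fun h => absurd hpref (by rw [h]; exact lt_irrefl _)
  have hsA : s ∉ I.assigned μ c := by
    simp only [assigned, mem_filter]
    exact fun h => hμs h.2
  have hsT : s ∈ T := mem_insert_self _ _
  have hs'T : s' ∈ T := mem_insert_of_mem hs'μ
  have hs'ne : s' ≠ s := fun h => hsA (h ▸ hs'μ)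
  -- s' is chosen
  have hs'in : s' ∈ I.CJSA c T := by
    by_contra hs'not
    have hsub : {s, s'} ⊆ T \ I.CJSA c T := by
      intro x hx
      rcases mem_insert.mp hx with rfl | hx
      · exact mem_sdiff.mpr ⟨hsT, hnot⟩
      · rw [mem_singleton] at hx
        subst hx
        exact mem_sdiff.mpr ⟨hs'T, hs'not⟩
    have h2 : 2 ≤ (T \ I.CJSA c T).card := by
      calc 2 = ({s, s'} : Finset S).card := (card_pair (Ne.symm hs'ne)).symm
        _ ≤ _ := card_le_card hsub
    have hsd : (T \ I.CJSA c T).card = T.card - (I.CJSA c T).card :=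
      card_sdiff_of_subset (I.CJSA_subset c T)
    have hc : (I.CJSA c T).card = min (I.q c) T.card := I.card_CJSA c T
    have hTc : T.card = (I.assigned μ c).card + 1 := card_insert_of_notMem hsA
    have hq := hm2 c
    omega
  -- case analysis on where s' sits
  rcases mem_union.mp hs'in with h | h
  · rcases mem_union.mp h with hGen | hRes
    · exact hnot (mem_union_left _ (mem_union_left _
        (I.mem_maxSet_of_lt hsT hGen hlt)))
    · have hs'set : s' ∈ (T ∩ I.dis) \ I.jsaGen c T := I.maxSet_subset _ _ _ hRes
      have hs'dis : s' ∈ I.dis := (mem_inter.mp (mem_sdiff.mp hs'set).1).2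
      have hsdis : s ∈ I.dis := himp hs'dis
      have hsnotG : s ∉ I.jsaGen c T := fun h =>
        hnot (mem_union_left _ (mem_union_left _ h))
      have hsset : s ∈ (T ∩ I.dis) \ I.jsaGen c T :=
        mem_sdiff.mpr ⟨mem_inter.mpr ⟨hsT, hsdis⟩, hsnotG⟩
      exact hnot (mem_union_left _ (mem_union_right _
        (I.mem_maxSet_of_lt hsset hRes hlt)))
  · have hsset : s ∈ T \ (I.jsaGen c T ∪ I.jsaRes c T) := by
      refine mem_sdiff.mpr ⟨hsT, fun hu => hnot (mem_union_left _ hu)⟩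
    exact hnot (mem_union_right _ (I.mem_maxSet_of_lt hsset h hlt))

end SchoolChoice
/-- any matching stable w.r.t. the joint-seat-allocation choice functions
admits no in-group blocking pairs. -/
theorem JSA_no_ingroup_blocking {S C : Type*} [Fintype S] [DecidableEq S] [Fintype C] [DecidableEq C]
    (I : SchoolChoice S C) (μ : S → Option C)
    (hstable : I.IsStable I.CJSA μ) (s : S) (c : C) :
    ¬ I.InGroupBlock μ s c := by
  rintro (⟨hsd, hacc, hpref, s', hs'μ, hs'd, hlt⟩ | ⟨hsd, hacc, hpref, s', hs'μ, hs'd, hlt⟩)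
  · exact I.no_block_aux μ hstable hacc hpref hs'μ (fun _ => hsd) hlt
  · exact I.no_block_aux μ hstable hacc hpref hs'μ (fun h => absurd h hs'd) hlt
end
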